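/- Let a ∈ L^∞(ℝ) with 0 < c₀ ≤ a ≤ c₁ a.e., χ the associated characteristic flow, and for Re(μ) > 0 define (R(μ)f)(x) = ∫_0^∞ e^{-μ z} f(χ(-z, x)) dz for f ∈ L²(ℝ). Then for every k ≥ 1, ‖R(μ)^k f‖_{L²} ≤ (c₁/c₀)^{1/2} Re(μ)^{-k} ‖f‖_{L²}. -/

import Mathlib

open MeasureTheory intervalIntegral

private lemma lipschitz_image_volume {K : NNReal} {φ : ℝ → ℝ} (h : LipschitzWith K φ)
    (s : Set ℝ) : volume (φ '' s) ≤ (K : ENNReal) * volume s := by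
  have h1 := h.hausdorffMeasure_image_le (d := 1) zero_le_one s
  rw [MeasureTheory.hausdorffMeasure_real] at h1
  simpa using h1

private lemma minkowski_two {α β : Type*} [MeasurableSpace α] [MeasurableSpace β]
    (μ : Measure α) (ν : Measure β) [SigmaFinite μ] [SigmaFinite ν]
    (F : β → α → ENNReal) (hF : Measurable (Function.uncurry F))
    (hfin : (∫⁻ x, (∫⁻ z, F z x ∂ν) ^ (2:ℝ) ∂μ) ≠ ⊤) :
    (∫⁻ x, (∫⁻ z, F z x ∂ν) ^ (2:ℝ) ∂μ) ^ (1/2:ℝ)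
      ≤ ∫⁻ z, (∫⁻ x, (F z x) ^ (2:ℝ) ∂μ) ^ (1/2:ℝ) ∂ν := by
  have hconj : Real.HolderConjugate 2 2 := Real.holderConjugate_iff.2 ⟨one_lt_two, by norm_num⟩
  set I : α → ENNReal := fun x => ∫⁻ z, F z x ∂ν with hIdef
  have hImeas : Measurable I := by
    have h : Measurable fun p : α × β => F p.2 p.1 := hF.comp measurable_swap
    exact h.lintegral_prod_right'
  set S : ENNReal := ∫⁻ x, I x ^ (2:ℝ) ∂μ with hSdef
  rcases eq_or_ne S 0 with h0 | h0
  · rw [h0, ENNReal.zero_rpow_of_pos (by norm_num)]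
    exact zero_le
  have hS12t : S ^ (1/2:ℝ) ≠ ⊤ := ENNReal.rpow_ne_top_of_nonneg (by norm_num) hfin
  have hS12 : S ^ (1/2:ℝ) ≠ 0 := (ENNReal.rpow_pos (pos_iff_ne_zero.2 h0) hfin).ne'
  have key : S ≤ (∫⁻ z, (∫⁻ x, F z x ^ (2:ℝ) ∂μ) ^ (1/2:ℝ) ∂ν) * S ^ (1/2:ℝ) := by
    have h1 : ∀ x, I x ^ (2:ℝ) = ∫⁻ z, F z x * I x ∂ν := by
      intro x
      have hm : Measurable fun z : β => F z x := hF.comp (measurable_id.prodMk measurable_const)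
      rw [lintegral_mul_const _ hm]
      rw [show ((2:ℝ)) = ((2:ℕ):ℝ) by norm_num, ENNReal.rpow_natCast, pow_two]
    calc S = ∫⁻ x, ∫⁻ z, F z x * I x ∂ν ∂μ := lintegral_congr h1
      _ = ∫⁻ z, ∫⁻ x, F z x * I x ∂μ ∂ν := by
          apply lintegral_lintegral_swap
          exact ((hF.comp measurable_swap).mul (hImeas.comp measurable_fst)).aemeasurable
      _ ≤ ∫⁻ z, (∫⁻ x, F z x ^ (2:ℝ) ∂μ) ^ (1/2:ℝ) * (∫⁻ x, I x ^ (2:ℝ) ∂μ) ^ (1/2:ℝ) ∂ν := by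
          refine lintegral_mono fun z => ?_
          have h2 := ENNReal.lintegral_mul_le_Lp_mul_Lq μ hconj
            (f := fun x => F z x) (g := I)
            (hF.comp (measurable_const.prodMk measurable_id)).aemeasurable hImeas.aemeasurable
          simpa using h2
      _ = (∫⁻ z, (∫⁻ x, F z x ^ (2:ℝ) ∂μ) ^ (1/2:ℝ) ∂ν) * S ^ (1/2:ℝ) :=
          lintegral_mul_const' _ _ hS12t
  have hSS : S ^ (1/2:ℝ) * S ^ (1/2:ℝ) = S := by
    rw [← ENNReal.rpow_add_of_nonneg _ _ (by norm_num) (by norm_num)]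
    norm_num
  have key2 : S ^ (1/2:ℝ) * S ^ (1/2:ℝ)
      ≤ (∫⁻ z, (∫⁻ x, F z x ^ (2:ℝ) ∂μ) ^ (1/2:ℝ) ∂ν) * S ^ (1/2:ℝ) := by
    rw [hSS]; exact key
  exact (ENNReal.mul_le_mul_iff_left hS12 hS12t).1 key2

theorem stmt_9 (a : ℝ → ℝ) (hmeas : Measurable a)
    (c₀ c₁ : ℝ) (hc₀ : 0 < c₀)
    (hbound : ∀ᵐ x : ℝ, c₀ ≤ a x ∧ a x ≤ c₁)
    (A : ℝ → ℝ) (hA : ∀ x : ℝ, A x = ∫ y in (0:ℝ)..x, (a y)⁻¹)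
    (χ : ℝ → ℝ → ℝ) (hχ : ∀ t x : ℝ, χ t x = Function.invFun A (t + A x))
    (μ : ℂ) (hμ : 0 < μ.re)
    (R : (ℝ → ℂ) → (ℝ → ℂ))
    (hR : ∀ (f : ℝ → ℂ) (x : ℝ),
      R f x = ∫ z in Set.Ioi (0:ℝ), Complex.exp (-μ * z) * f (χ (-z) x)) :
    ∀ (f : ℝ → ℂ), MemLp f 2 (volume : Measure ℝ) →
      ∀ k : ℕ, 1 ≤ k →
        eLpNorm (R^[k] f) 2 (volume : Measure ℝ)
          ≤ ENNReal.ofReal (Real.sqrt (c₁ / c₀) / μ.re ^ k)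
              * eLpNorm f 2 (volume : Measure ℝ) := by
  classical
  -- basic constants
  have hcc : c₀ ≤ c₁ := by
    obtain ⟨x, hx⟩ := hbound.exists
    linarith [hx.1, hx.2]
  have hc₁ : 0 < c₁ := lt_of_lt_of_le hc₀ hcc
  set r : ℝ := μ.re with hrdef
  have hr : 0 < r := hμ
  -- integrability of a⁻¹
  have hbd : ∀ᵐ y : ℝ, ‖(a y)⁻¹‖ ≤ c₀⁻¹ := by
    filter_upwards [hbound] with y hy
    have h1 : 0 < a y := lt_of_lt_of_le hc₀ hy.1
    rw [Real.norm_eq_abs, abs_of_nonneg (inv_nonneg.2 h1.le)]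
    exact inv_anti₀ hc₀ hy.1
  have hia : ∀ u v : ℝ, IntervalIntegrable (fun y => (a y)⁻¹) volume u v := by
    intro u v
    rw [intervalIntegrable_iff]
    refine Measure.integrableOn_of_bounded (M := c₀⁻¹) ?_ (hmeas.inv.aestronglyMeasurable) ?_
    · rw [Set.uIoc]; exact measure_Ioc_lt_top.ne
    · exact ae_restrict_of_ae hbd
  have hAdiff : ∀ x y : ℝ, A y - A x = ∫ u in x..y, (a u)⁻¹ := by
    intro x y
    rw [hA, hA, ← intervalIntegral.integral_interval_sub_left (hia 0 y) (hia 0 x)]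
  have hAbnd : ∀ x y : ℝ, x ≤ y → (y - x) / c₁ ≤ A y - A x ∧ A y - A x ≤ (y - x) / c₀ := by
    intro x y hxy
    rw [hAdiff, intervalIntegral.integral_of_le hxy]
    have hfin : volume (Set.Ioc x y) ≠ ⊤ := measure_Ioc_lt_top.ne
    have hic : IntegrableOn (fun u => (a u)⁻¹) (Set.Ioc x y) volume := by
      have := hia x y
      rw [intervalIntegrable_iff_integrableOn_Ioc_of_le hxy] at this
      exact this
    have hcc' : ∀ (c : ℝ), (∫ _ in Set.Ioc x y, c) = (y - x) * c := by
      intro c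
      rw [setIntegral_const, Real.volume_real_Ioc_of_le hxy,
        smul_eq_mul]
    constructor
    · have hmono : (∫ _ in Set.Ioc x y, c₁⁻¹) ≤ ∫ u in Set.Ioc x y, (a u)⁻¹ := by
        apply setIntegral_mono_ae (integrableOn_const measure_Ioc_lt_top.ne) hic
        filter_upwards [hbound] with u hu
        have h1 : 0 < a u := lt_of_lt_of_le hc₀ hu.1
        exact inv_anti₀ h1 hu.2
      rw [hcc'] at hmono
      calc (y - x) / c₁ = (y - x) * c₁⁻¹ := by ring
        _ ≤ _ := hmono
    · have hmono : (∫ u in Set.Ioc x y, (a u)⁻¹) ≤ ∫ _ in Set.Ioc x y, c₀⁻¹ := by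
        apply setIntegral_mono_ae hic (integrableOn_const measure_Ioc_lt_top.ne)
        filter_upwards [hbound] with u hu
        have h1 : 0 < a u := lt_of_lt_of_le hc₀ hu.1
        exact inv_anti₀ hc₀ hu.1
      rw [hcc'] at hmono
      refine le_trans hmono (le_of_eq (by ring))
  have hAmono : StrictMono A := by
    intro x y hxy
    have h := (hAbnd x y hxy.le).1
    have h2 : 0 < (y - x) / c₁ := div_pos (sub_pos.2 hxy) hc₁
    linarith
  have hAinj : Function.Injective A := hAmono.injective
  have hAkey : ∀ x y : ℝ, x ≤ y → |A y - A x| ≤ c₀⁻¹ * |y - x| := by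
    intro x y h
    obtain ⟨h1, h2⟩ := hAbnd x y h
    have h3 : 0 ≤ (y - x) / c₁ := div_nonneg (sub_nonneg.2 h) hc₁.le
    rw [abs_of_nonneg (by linarith), abs_of_nonneg (sub_nonneg.2 h)]
    calc A y - A x ≤ (y - x) / c₀ := h2
      _ = c₀⁻¹ * (y - x) := by ring
  have hALip : LipschitzWith (Real.toNNReal c₀⁻¹) A := by
    apply LipschitzWith.of_dist_le_mul
    intro x y
    rw [Real.dist_eq, Real.dist_eq, Real.coe_toNNReal _ (inv_nonneg.2 hc₀.le)]
    rcases le_total x y with h | h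
    · rw [abs_sub_comm (A x), abs_sub_comm x]
      exact hAkey x y h
    · exact hAkey y x h
  have hAcont : Continuous A := hALip.continuous
  have hA0 : A 0 = 0 := by rw [hA]; exact intervalIntegral.integral_same
  have htop : Filter.Tendsto A Filter.atTop Filter.atTop := by
    have hf : Filter.Tendsto (fun y : ℝ => y / c₁) Filter.atTop Filter.atTop :=
      Filter.tendsto_id.atTop_div_const hc₁
    refine Filter.tendsto_atTop_mono' _ ?_ hf
    filter_upwards [Filter.eventually_ge_atTop (0:ℝ)] with y hy
    have h := (hAbnd 0 y hy).1
    rw [hA0] at h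
    have : (y - 0)/c₁ = y / c₁ := by ring
    linarith [this ▸ h]
  have hbot : Filter.Tendsto A Filter.atBot Filter.atBot := by
    have hf : Filter.Tendsto (fun y : ℝ => y / c₁) Filter.atBot Filter.atBot :=
      Filter.tendsto_id.atBot_div_const hc₁
    refine Filter.tendsto_atBot_mono' _ ?_ hf
    filter_upwards [Filter.eventually_le_atBot (0:ℝ)] with y hy
    have h := (hAbnd y 0 hy).1
    rw [hA0] at h
    have h2 : (0 - y)/c₁ = -(y / c₁) := by ring
    rw [h2] at h
    linarith
  have hAsurj : Function.Surjective A := hAcont.surjective htop hbot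
  set B : ℝ → ℝ := Function.invFun A with hBdef
  have hBA : ∀ x, B (A x) = x := fun x => Function.leftInverse_invFun hAinj x
  have hAB : ∀ u, A (B u) = u := fun u => Function.rightInverse_invFun hAsurj u
  have hBbnd : ∀ u v : ℝ, u ≤ v → c₀ * (v - u) ≤ B v - B u ∧ B v - B u ≤ c₁ * (v - u) := by
    intro u v huv
    have hm : B u ≤ B v := by
      by_contra hcon
      push_neg at hcon
      have := hAmono hcon
      rw [hAB, hAB] at this
      linarith
    obtain ⟨h1, h2⟩ := hAbnd (B u) (B v) hm
    rw [hAB, hAB] at h1 h2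
    constructor
    · rw [le_div_iff₀ hc₀] at h2
      nlinarith
    · rw [div_le_iff₀ hc₁] at h1
      nlinarith
  have hBkey : ∀ u v : ℝ, u ≤ v → |B v - B u| ≤ c₁ * |v - u| := by
    intro u v h
    obtain ⟨h1, h2⟩ := hBbnd u v h
    have h3 : 0 ≤ c₀ * (v - u) := mul_nonneg hc₀.le (sub_nonneg.2 h)
    rw [abs_of_nonneg (by linarith), abs_of_nonneg (sub_nonneg.2 h)]
    exact h2
  have hBLip : LipschitzWith (Real.toNNReal c₁) B := by
    apply LipschitzWith.of_dist_le_mul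
    intro u v
    rw [Real.dist_eq, Real.dist_eq, Real.coe_toNNReal _ hc₁.le]
    rcases le_total u v with h | h
    · rw [abs_sub_comm (B u), abs_sub_comm u]
      exact hBkey u v h
    · exact hBkey v u h
  have hBcont : Continuous B := hBLip.continuous
  -- χ facts
  have hχ0 : ∀ x, χ 0 x = x := by
    intro x
    rw [hχ, zero_add]
    exact hBA x
  have hχadd : ∀ s t x, χ s (χ t x) = χ (s + t) x := by
    intro s t x
    rw [hχ s, hχ t, hAB, hχ (s+t), add_assoc]
  have hχmono : ∀ t, Monotone (χ t) := by
    intro t x y hxy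
    rw [hχ, hχ]
    have hle : t + A x ≤ t + A y := by
      have := (hAmono.le_iff_le).2 hxy
      linarith
    have h1 := (hBbnd _ _ hle).1
    nlinarith [mul_nonneg hc₀.le (sub_nonneg.2 hle)]
  have hχbnd : ∀ t x y, x ≤ y → χ t y - χ t x ≤ (c₁/c₀) * (y - x) := by
    intro t x y h
    rw [hχ, hχ]
    have hle : t + A x ≤ t + A y := by
      have := (hAmono.le_iff_le).2 h
      linarith
    have h2 := (hBbnd _ _ hle).2
    have h3 := (hAbnd x y h).2
    have h4 : (t + A y) - (t + A x) = A y - A x := by ring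
    rw [h4] at h2
    calc B (t + A y) - B (t + A x) ≤ c₁ * (A y - A x) := h2
      _ ≤ c₁ * ((y - x)/c₀) := mul_le_mul_of_nonneg_left h3 hc₁.le
      _ = (c₁/c₀) * (y - x) := by ring
  have hχLip : ∀ t, LipschitzWith (Real.toNNReal (c₁/c₀)) (χ t) := by
    intro t
    apply LipschitzWith.of_dist_le_mul
    intro x y
    rw [Real.dist_eq, Real.dist_eq, Real.coe_toNNReal _ (div_nonneg hc₁.le hc₀.le)]
    rcases le_total x y with h | h
    · rw [abs_sub_comm (χ t x), abs_sub_comm x,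
        abs_of_nonneg (sub_nonneg.2 (hχmono t h)), abs_of_nonneg (sub_nonneg.2 h)]
      exact hχbnd t x y h
    · rw [abs_of_nonneg (sub_nonneg.2 (hχmono t h)), abs_of_nonneg (sub_nonneg.2 h)]
      exact hχbnd t y x h
  have hχtcont : ∀ t, Continuous (χ t) := fun t => (hχLip t).continuous
  have hχjoint : Continuous fun p : ℝ × ℝ => χ p.1 p.2 := by
    have heq : (fun p : ℝ × ℝ => χ p.1 p.2) = fun p : ℝ × ℝ => B (p.1 + A p.2) := by
      funext p; rw [hχ]
    rw [heq]
    exact hBcont.comp (continuous_fst.add (hAcont.comp continuous_snd))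
  -- measure transport
  have hmap : ∀ t : ℝ, ∀ s : Set ℝ, MeasurableSet s →
      volume (χ t ⁻¹' s) ≤ ENNReal.ofReal (c₁/c₀) * volume s := by
    intro t s _
    have himg : χ t ⁻¹' s = χ (-t) '' s := by
      ext x
      constructor
      · intro hx
        exact ⟨χ t x, hx, by rw [hχadd, neg_add_cancel, hχ0]⟩
      · rintro ⟨y, hy, rfl⟩
        have : χ t (χ (-t) y) = y := by rw [hχadd, add_neg_cancel, hχ0]
        simpa [Set.mem_preimage, this] using hy
    rw [himg]
    calc volume (χ (-t) '' s) ≤ ((Real.toNNReal (c₁/c₀) : NNReal) : ENNReal) * volume s :=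
          lipschitz_image_volume (hχLip (-t)) s
      _ = ENNReal.ofReal (c₁/c₀) * volume s := rfl
  have hCOV : ∀ (t : ℝ) (F : ℝ → ENNReal),
      (∫⁻ x, F (χ t x)) ≤ ENNReal.ofReal (c₁/c₀) * ∫⁻ y, F y := by
    intro t F
    let e : ℝ ≃ᵐ ℝ := Homeomorph.toMeasurableEquiv
      { toFun := χ t
        invFun := χ (-t)
        left_inv := fun x => by rw [hχadd, neg_add_cancel, hχ0]
        right_inv := fun x => by rw [hχadd, add_neg_cancel, hχ0]
        continuous_toFun := hχtcont t
        continuous_invFun := hχtcont (-t) }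
    have hcoe : ⇑e = χ t := rfl
    have h1 : (∫⁻ x, F (χ t x)) = ∫⁻ y, F y ∂(volume.map e) := by
      rw [lintegral_map_equiv F e, hcoe]
    rw [h1]
    have hle : volume.map e ≤ ENNReal.ofReal (c₁/c₀) • volume := by
      rw [Measure.le_iff]
      intro s hs
      rw [Measure.map_apply e.measurable hs, Measure.smul_apply, smul_eq_mul, hcoe]
      exact hmap t s hs
    calc (∫⁻ y, F y ∂(volume.map e))
        ≤ ∫⁻ y, F y ∂(ENNReal.ofReal (c₁/c₀) • volume) := lintegral_mono' hle le_rfl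
      _ = ENNReal.ofReal (c₁/c₀) * ∫⁻ y, F y := lintegral_smul_measure _ _
  -- rpow helpers
  have hhalfsq : ∀ x : ENNReal, (x ^ (1/2:ℝ)) ^ (2:ℝ) = x := by
    intro x
    rw [← ENNReal.rpow_mul, show (1/2:ℝ)*2 = 1 by norm_num, ENNReal.rpow_one]
  have hsqhalf : ∀ x : ENNReal, (x ^ (2:ℝ)) ^ (1/2:ℝ) = x := by
    intro x
    rw [← ENNReal.rpow_mul, show (2:ℝ)*(1/2) = 1 by norm_num, ENNReal.rpow_one]
  have hsqrt : ∀ x : ENNReal, x ^ (1/2:ℝ) * x ^ (1/2:ℝ) = x := by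
    intro x
    rw [← ENNReal.rpow_add_of_nonneg _ _ (by norm_num) (by norm_num)]
    norm_num
  have hels : ∀ g : ℝ → ℂ,
      eLpNorm g 2 volume = (∫⁻ x, ((‖g x‖₊ : ENNReal)) ^ (2:ℝ)) ^ (1/2:ℝ) := by
    intro g
    rw [eLpNorm_eq_lintegral_rpow_enorm_toReal (by norm_num) (by norm_num)]
    norm_num
    rfl
  -- exponential integral
  have hexpint : (∫⁻ z in Set.Ioi (0:ℝ), ENNReal.ofReal (Real.exp (-(r * z))))
      = ENNReal.ofReal (1/r) := by
    have hi : IntegrableOn (fun z : ℝ => Real.exp (-(r * z))) (Set.Ioi 0) volume := by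
      have := exp_neg_integrableOn_Ioi 0 hr
      simpa [neg_mul] using this
    rw [← ofReal_integral_eq_lintegral_ofReal hi
      (Filter.Eventually.of_forall fun z => (Real.exp_pos _).le)]
    congr 1
    have hval := integral_comp_mul_left_Ioi (fun u : ℝ => Real.exp (-u)) 0 hr
    simp only [mul_zero] at hval
    rw [show (fun z : ℝ => Real.exp (-(r * z))) = fun z : ℝ => Real.exp (-(r * z)) from rfl]
    calc (∫ z in Set.Ioi (0:ℝ), Real.exp (-(r * z))) = r⁻¹ • ∫ x in Set.Ioi (0:ℝ), Real.exp (-x) := hval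
      _ = 1/r := by rw [integral_exp_neg_Ioi_zero, smul_eq_mul, mul_one, one_div]
  have hconj : Real.HolderConjugate 2 2 := Real.holderConjugate_iff.2 ⟨one_lt_two, by norm_num⟩
  -- now fix f
  intro f hf k hk
  obtain ⟨f', hf'sm, hff'⟩ : ∃ f' : ℝ → ℂ, StronglyMeasurable f' ∧ f =ᵐ[volume] f' :=
    ⟨hf.1.mk f, hf.1.stronglyMeasurable_mk, hf.1.ae_eq_mk⟩
  have hNf : eLpNorm f' 2 volume ≠ ⊤ := (hf.ae_eq hff').2.ne
  -- R f = R f'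
  have himgnull : volume (A '' {y | f y ≠ f' y}) = 0 := by
    have h0 : volume {y | f y ≠ f' y} = 0 := ae_iff.1 hff'
    have h1 := lipschitz_image_volume hALip {y | f y ≠ f' y}
    rw [h0, mul_zero] at h1
    exact le_antisymm h1 zero_le
  have hRfe : R f = R f' := by
    funext x
    rw [hR f x, hR f' x]
    apply MeasureTheory.integral_congr_ae
    obtain ⟨M, hsubM, hMmeas, hM0⟩ := exists_measurable_superset_of_null himgnull
    have hpre : volume ((fun z : ℝ => A x - z) ⁻¹' M) = 0 := by
      rw [(Measure.measurePreserving_sub_left volume (A x)).measure_preimage hMmeas.nullMeasurableSet]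
      exact hM0
    have hsub : {z : ℝ | f (χ (-z) x) ≠ f' (χ (-z) x)} ⊆ (fun z : ℝ => A x - z) ⁻¹' M := by
      intro z hz
      apply hsubM
      refine ⟨χ (-z) x, hz, ?_⟩
      rw [hχ, hAB]
      ring
    have hznull : volume {z : ℝ | f (χ (-z) x) ≠ f' (χ (-z) x)} = 0 :=
      measure_mono_null hsub hpre
    have hae : ∀ᵐ z : ℝ, f (χ (-z) x) = f' (χ (-z) x) := by
      rw [ae_iff]; exact hznull
    filter_upwards [ae_restrict_of_ae hae] with z hz
    rw [hz]
  have hiter : R^[k] f = R^[k] f' := by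
    obtain ⟨m, rfl⟩ : ∃ m, k = m + 1 := ⟨k - 1, (Nat.succ_pred_eq_of_pos hk).symm⟩
    rw [Function.iterate_succ_apply, Function.iterate_succ_apply, hRfe]
  -- strong measurability of iterates
  have hSM : ∀ n : ℕ, StronglyMeasurable (R^[n] f') := by
    intro n
    induction n with
    | zero => exact hf'sm
    | succ m ih =>
      rw [Function.iterate_succ_apply']
      have hFm : StronglyMeasurable fun p : ℝ × ℝ =>
          Complex.exp (-μ * p.2) * (R^[m] f') (χ (-p.2) p.1) := by
        apply Measurable.stronglyMeasurable
        apply Measurable.mul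
        · exact (Complex.continuous_exp.comp
            (continuous_const.mul (Complex.continuous_ofReal.comp continuous_snd))).measurable
        · exact ih.measurable.comp
            (hχjoint.comp ((continuous_snd.neg).prodMk continuous_fst)).measurable
      have h2 := hFm.integral_prod_right' (ν := volume.restrict (Set.Ioi (0:ℝ)))
      have heq : R (R^[m] f') = fun x => ∫ z in Set.Ioi (0:ℝ),
          Complex.exp (-μ * z) * (R^[m] f') (χ (-z) x) := by
        funext x; exact hR _ x
      rw [heq]
      exact h2
  -- main induction
  have main : ∀ (n : ℕ) (t : ℝ),
      (∫⁻ x, ((‖(R^[n] f') (χ t x)‖₊ : ENNReal)) ^ (2:ℝ)) ^ (1/2:ℝ)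
        ≤ ENNReal.ofReal (Real.sqrt (c₁/c₀)) * ENNReal.ofReal (1/r) ^ n
            * eLpNorm f' 2 volume := by
    intro n
    induction n with
    | zero =>
      intro t
      simp only [Function.iterate_zero, id_eq, pow_zero, mul_one]
      have h1 := hCOV t (fun y => ((‖f' y‖₊ : ENNReal)) ^ (2:ℝ))
      have h2 := ENNReal.rpow_le_rpow h1 (by norm_num : (0:ℝ) ≤ 1/2)
      refine le_trans h2 ?_
      rw [ENNReal.mul_rpow_of_nonneg _ _ (by norm_num : (0:ℝ) ≤ 1/2), ← hels f',
        ENNReal.ofReal_rpow_of_nonneg (div_nonneg hc₁.le hc₀.le) (by norm_num : (0:ℝ) ≤ 1/2),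
        ← Real.sqrt_eq_rpow]
    | succ m ih =>
      intro t
      set g : ℝ → ℂ := R^[m] f' with hgdef
      have hgsm : StronglyMeasurable g := hSM m
      set C : ENNReal := ENNReal.ofReal (Real.sqrt (c₁/c₀)) * ENNReal.ofReal (1/r) ^ m
          * eLpNorm f' 2 volume with hCdef
      have hCfin : C ≠ ⊤ :=
        ENNReal.mul_ne_top (ENNReal.mul_ne_top ENNReal.ofReal_ne_top
          (ENNReal.pow_ne_top ENNReal.ofReal_ne_top)) hNf
      have hC2fin : C ^ (2:ℝ) ≠ ⊤ := ENNReal.rpow_ne_top_of_nonneg (by norm_num) hCfin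
      have ihsq : ∀ s, (∫⁻ x, ((‖g (χ s x)‖₊ : ENNReal)) ^ (2:ℝ)) ≤ C ^ (2:ℝ) := by
        intro s
        have h1 := ENNReal.rpow_le_rpow (ih s) (by norm_num : (0:ℝ) ≤ 2)
        rwa [hhalfsq] at h1
      set F : ℝ → ℝ → ENNReal := fun z x =>
        ENNReal.ofReal (Real.exp (-(r * z))) * ((‖g (χ (t - z) x)‖₊ : ENNReal)) with hFdef
      have hFmeas : Measurable (Function.uncurry F) := by
        show Measurable ((fun p : ℝ × ℝ => ENNReal.ofReal (Real.exp (-(r * p.1))))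
          * fun p : ℝ × ℝ => ((‖g (χ (t - p.1) p.2)‖₊ : ENNReal)))
        apply Measurable.mul
        · exact (Real.continuous_exp.comp
            ((continuous_const.mul continuous_fst).neg)).measurable.ennreal_ofReal
        · apply Measurable.coe_nnreal_ennreal
          apply Measurable.nnnorm
          exact hgsm.measurable.comp
            (hχjoint.comp ((continuous_const.sub continuous_fst).prodMk continuous_snd)).measurable
      -- pointwise bound
      have hpt : ∀ x, ((‖(R^[m+1] f') (χ t x)‖₊ : ENNReal)) ≤ ∫⁻ z in Set.Ioi (0:ℝ), F z x := by
        intro x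
        rw [Function.iterate_succ_apply', hR]
        refine le_trans (enorm_integral_le_lintegral_enorm _) (lintegral_mono fun z => ?_)
        have hcomp : χ (-z) (χ t x) = χ (t - z) x := by
          rw [hχadd, neg_add_eq_sub]
        have hnorm : ((‖Complex.exp (-μ * (z:ℂ))‖₊ : ENNReal))
            = ENNReal.ofReal (Real.exp (-(r * z))) := by
          rw [← enorm_eq_nnnorm, ← ofReal_norm_eq_enorm]
          congr 1
          rw [Complex.norm_exp]
          congr 1
          rw [hrdef]
          simp [Complex.mul_re]
        rw [enorm_mul, enorm_eq_nnnorm (Complex.exp _), hcomp, hnorm]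
        exact le_rfl
      -- finiteness
      have hW2meas : Measurable (Function.uncurry fun z x : ℝ =>
          ENNReal.ofReal (Real.exp (-(r * z))) * ((‖g (χ (t - z) x)‖₊ : ENNReal)) ^ (2:ℝ)) := by
        apply Measurable.mul
        · exact (Real.continuous_exp.comp
            ((continuous_const.mul continuous_fst).neg)).measurable.ennreal_ofReal
        · apply Measurable.pow_const
          apply Measurable.coe_nnreal_ennreal
          apply Measurable.nnnorm
          exact hgsm.measurable.comp
            (hχjoint.comp ((continuous_const.sub continuous_fst).prodMk continuous_snd)).measurable
      have hinner : ∀ z : ℝ, (∫⁻ x, ENNReal.ofReal (Real.exp (-(r * z)))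
            * ((‖g (χ (t - z) x)‖₊ : ENNReal)) ^ (2:ℝ))
          ≤ ENNReal.ofReal (Real.exp (-(r * z))) * C ^ (2:ℝ) := by
        intro z
        rw [lintegral_const_mul' _ _ ENNReal.ofReal_ne_top]
        exact mul_le_mul_right (ihsq (t - z)) _
      have hswap : (∫⁻ x, ∫⁻ z in Set.Ioi (0:ℝ),
            ENNReal.ofReal (Real.exp (-(r * z))) * ((‖g (χ (t - z) x)‖₊ : ENNReal)) ^ (2:ℝ))
          = ∫⁻ z in Set.Ioi (0:ℝ), ∫⁻ x,
            ENNReal.ofReal (Real.exp (-(r * z))) * ((‖g (χ (t - z) x)‖₊ : ENNReal)) ^ (2:ℝ) := by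
        apply lintegral_lintegral_swap
        exact (hW2meas.comp measurable_swap).aemeasurable
      have hWfin : (∫⁻ z in Set.Ioi (0:ℝ), ∫⁻ x,
            ENNReal.ofReal (Real.exp (-(r * z))) * ((‖g (χ (t - z) x)‖₊ : ENNReal)) ^ (2:ℝ))
          ≤ ENNReal.ofReal (1/r) * C ^ (2:ℝ) := by
        calc (∫⁻ z in Set.Ioi (0:ℝ), ∫⁻ x,
              ENNReal.ofReal (Real.exp (-(r * z))) * ((‖g (χ (t - z) x)‖₊ : ENNReal)) ^ (2:ℝ))
            ≤ ∫⁻ z in Set.Ioi (0:ℝ), ENNReal.ofReal (Real.exp (-(r * z))) * C ^ (2:ℝ) :=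
              lintegral_mono hinner
          _ = (∫⁻ z in Set.Ioi (0:ℝ), ENNReal.ofReal (Real.exp (-(r * z)))) * C ^ (2:ℝ) :=
              lintegral_mul_const' _ _ hC2fin
          _ = ENNReal.ofReal (1/r) * C ^ (2:ℝ) := by rw [hexpint]
      have hcs : ∀ x, (∫⁻ z in Set.Ioi (0:ℝ), F z x) ^ (2:ℝ)
          ≤ ENNReal.ofReal (1/r) * ∫⁻ z in Set.Ioi (0:ℝ),
              ENNReal.ofReal (Real.exp (-(r * z))) * ((‖g (χ (t - z) x)‖₊ : ENNReal)) ^ (2:ℝ) := by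
        intro x
        have humeas : Measurable fun z : ℝ => ENNReal.ofReal (Real.exp (-(r * z))) ^ (1/2:ℝ) :=
          ((Real.continuous_exp.comp
            ((continuous_const.mul continuous_id).neg)).measurable.ennreal_ofReal).pow_const _
        have hvmeas : Measurable fun z : ℝ =>
            ENNReal.ofReal (Real.exp (-(r * z))) ^ (1/2:ℝ)
              * ((‖g (χ (t - z) x)‖₊ : ENNReal)) := by
          apply humeas.mul
          apply Measurable.coe_nnreal_ennreal
          apply Measurable.nnnorm
          exact hgsm.measurable.comp (hχjoint.comp
            ((continuous_const.sub continuous_id).prodMk continuous_const)).measurable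
        have hFsplit : ∀ z : ℝ, F z x
            = (ENNReal.ofReal (Real.exp (-(r * z))) ^ (1/2:ℝ))
              * (ENNReal.ofReal (Real.exp (-(r * z))) ^ (1/2:ℝ)
                * ((‖g (χ (t - z) x)‖₊ : ENNReal))) := by
          intro z
          rw [← mul_assoc, hsqrt]
        have hCS := ENNReal.lintegral_mul_le_Lp_mul_Lq (volume.restrict (Set.Ioi (0:ℝ))) hconj
          humeas.aemeasurable hvmeas.aemeasurable
        simp only [Pi.mul_apply] at hCS
        have e1 : (∫⁻ z in Set.Ioi (0:ℝ),
              (ENNReal.ofReal (Real.exp (-(r * z))) ^ (1/2:ℝ)) ^ (2:ℝ))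
            = ∫⁻ z in Set.Ioi (0:ℝ), ENNReal.ofReal (Real.exp (-(r * z))) :=
          lintegral_congr fun z => hhalfsq _
        have e2 : (∫⁻ z in Set.Ioi (0:ℝ),
              (ENNReal.ofReal (Real.exp (-(r * z))) ^ (1/2:ℝ)
                * ((‖g (χ (t - z) x)‖₊ : ENNReal))) ^ (2:ℝ))
            = ∫⁻ z in Set.Ioi (0:ℝ),
              ENNReal.ofReal (Real.exp (-(r * z))) * ((‖g (χ (t - z) x)‖₊ : ENNReal)) ^ (2:ℝ) := by
          refine lintegral_congr fun z => ?_
          rw [ENNReal.mul_rpow_of_nonneg _ _ (by norm_num : (0:ℝ) ≤ 2), hhalfsq]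
        rw [e1, e2] at hCS
        have h1 : (∫⁻ z in Set.Ioi (0:ℝ), F z x)
            ≤ (∫⁻ z in Set.Ioi (0:ℝ), ENNReal.ofReal (Real.exp (-(r * z)))) ^ (1/2:ℝ)
              * (∫⁻ z in Set.Ioi (0:ℝ), ENNReal.ofReal (Real.exp (-(r * z)))
                  * ((‖g (χ (t - z) x)‖₊ : ENNReal)) ^ (2:ℝ)) ^ (1/2:ℝ) := by
          refine le_trans (le_of_eq (lintegral_congr hFsplit)) hCS
        have h2 := ENNReal.rpow_le_rpow h1 (by norm_num : (0:ℝ) ≤ 2)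
        rw [ENNReal.mul_rpow_of_nonneg _ _ (by norm_num : (0:ℝ) ≤ 2), hhalfsq, hhalfsq,
          hexpint] at h2
        exact h2
      have hIfin : (∫⁻ x, (∫⁻ z in Set.Ioi (0:ℝ), F z x) ^ (2:ℝ)) ≠ ⊤ := by
        have hb : (∫⁻ x, (∫⁻ z in Set.Ioi (0:ℝ), F z x) ^ (2:ℝ))
            ≤ ENNReal.ofReal (1/r) * (ENNReal.ofReal (1/r) * C ^ (2:ℝ)) := by
          calc (∫⁻ x, (∫⁻ z in Set.Ioi (0:ℝ), F z x) ^ (2:ℝ))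
              ≤ ∫⁻ x, ENNReal.ofReal (1/r) * ∫⁻ z in Set.Ioi (0:ℝ),
                  ENNReal.ofReal (Real.exp (-(r * z)))
                    * ((‖g (χ (t - z) x)‖₊ : ENNReal)) ^ (2:ℝ) := lintegral_mono hcs
            _ = ENNReal.ofReal (1/r) * ∫⁻ x, ∫⁻ z in Set.Ioi (0:ℝ),
                  ENNReal.ofReal (Real.exp (-(r * z)))
                    * ((‖g (χ (t - z) x)‖₊ : ENNReal)) ^ (2:ℝ) :=
                lintegral_const_mul' _ _ ENNReal.ofReal_ne_top
            _ = ENNReal.ofReal (1/r) * ∫⁻ z in Set.Ioi (0:ℝ), ∫⁻ x,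
                  ENNReal.ofReal (Real.exp (-(r * z)))
                    * ((‖g (χ (t - z) x)‖₊ : ENNReal)) ^ (2:ℝ) := by rw [hswap]
            _ ≤ ENNReal.ofReal (1/r) * (ENNReal.ofReal (1/r) * C ^ (2:ℝ)) :=
                mul_le_mul_right hWfin _
        exact ne_top_of_le_ne_top
          (ENNReal.mul_ne_top ENNReal.ofReal_ne_top
            (ENNReal.mul_ne_top ENNReal.ofReal_ne_top hC2fin)) hb
      have hmink := minkowski_two volume (volume.restrict (Set.Ioi (0:ℝ))) F hFmeas hIfin
      calc (∫⁻ x, ((‖(R^[m+1] f') (χ t x)‖₊ : ENNReal)) ^ (2:ℝ)) ^ (1/2:ℝ)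
          ≤ (∫⁻ x, (∫⁻ z in Set.Ioi (0:ℝ), F z x) ^ (2:ℝ)) ^ (1/2:ℝ) :=
            ENNReal.rpow_le_rpow
              (lintegral_mono fun x => ENNReal.rpow_le_rpow (hpt x) (by norm_num)) (by norm_num)
        _ ≤ ∫⁻ z in Set.Ioi (0:ℝ), (∫⁻ x, F z x ^ (2:ℝ)) ^ (1/2:ℝ) := hmink
        _ ≤ ∫⁻ z in Set.Ioi (0:ℝ), ENNReal.ofReal (Real.exp (-(r * z))) * C := by
            refine lintegral_mono fun z => ?_
            have e1 : ∀ x, F z x ^ (2:ℝ)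
                = ENNReal.ofReal (Real.exp (-(r * z))) ^ (2:ℝ)
                  * ((‖g (χ (t - z) x)‖₊ : ENNReal)) ^ (2:ℝ) :=
              fun x => ENNReal.mul_rpow_of_nonneg _ _ (by norm_num)
            rw [lintegral_congr e1, lintegral_const_mul' _ _
              (ENNReal.rpow_ne_top_of_nonneg (by norm_num) ENNReal.ofReal_ne_top),
              ENNReal.mul_rpow_of_nonneg _ _ (by norm_num : (0:ℝ) ≤ 1/2), hsqhalf]
            exact mul_le_mul_right (ih (t - z)) _
        _ = (∫⁻ z in Set.Ioi (0:ℝ), ENNReal.ofReal (Real.exp (-(r * z)))) * C :=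
            lintegral_mul_const' _ _ hCfin
        _ = ENNReal.ofReal (1/r) * C := by rw [hexpint]
        _ = ENNReal.ofReal (Real.sqrt (c₁/c₀)) * ENNReal.ofReal (1/r) ^ (m+1)
              * eLpNorm f' 2 volume := by
            rw [hCdef]; ring
  -- conclusion
  have hfinal := main k 0
  simp only [hχ0] at hfinal
  rw [hiter, eLpNorm_congr_ae hff', hels]
  refine le_trans hfinal ?_
  apply mul_le_mul_left
  rw [← ENNReal.ofReal_pow (by positivity : (0:ℝ) ≤ 1/r),
    ← ENNReal.ofReal_mul (Real.sqrt_nonneg _)]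
  apply ENNReal.ofReal_le_ofReal
  rw [one_div, inv_pow, ← div_eq_mul_inv]
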